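/- Let k be an algebraically closed field of characteristic zero, V a finite-dimensional ℤ/2ℤ-graded vector space over k with an odd symmetric non-degenerate scalar product g, and I an odd anti-self-adjoint operator on V. If the symmetric bilinear form (x, y) ↦ g(Ix, y) on V₁ is non-degenerate (equivalently, the even quadratic function x ↦ g(Ix, x) on the even part of the parity-reversed space ΠV is a non-degenerate quadratic form), then there exists an odd self-adjoint operator Ĩ on V with I∘Ĩ + Ĩ∘I = id_V. -/

import Mathlib

/-- A finite-dimensional ℤ/2ℤ-graded vector space `V = V₀ ⊕ V₁` equipped with an odd
symmetric non-degenerate scalar product `g`: `g` vanishes on `V₀ × V₀` and `V₁ × V₁`,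
is symmetric, and non-degenerate (hence a perfect pairing between `V₀` and `V₁`). -/
structure OddSP (k V : Type*) [Field k] [AddCommGroup V] [Module k V] where
  V0 : Submodule k V
  V1 : Submodule k V
  compl : IsCompl V0 V1
  g : V →ₗ[k] V →ₗ[k] k
  symm : ∀ x y, g x y = g y x
  zero00 : ∀ x ∈ V0, ∀ y ∈ V0, g x y = 0
  zero11 : ∀ x ∈ V1, ∀ y ∈ V1, g x y = 0
  nondeg : ∀ x, (∀ y, g x y = 0) → x = 0

variable {k V : Type*} [Field k] [AddCommGroup V] [Module k V]

/-- `v` is homogeneous of parity `p` (mod 2). -/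
def OddSP.Homog (S : OddSP k V) (p : ℕ) (v : V) : Prop :=
  if p % 2 = 0 then v ∈ S.V0 else v ∈ S.V1

/-- A linear operator is odd if it exchanges the even and odd parts. -/
def OddSP.IsOddOp (S : OddSP k V) (I : V →ₗ[k] V) : Prop :=
  (∀ x ∈ S.V0, I x ∈ S.V1) ∧ (∀ x ∈ S.V1, I x ∈ S.V0)

/-- `g(Ix,y) + (−1)^{|x|} g(x,Iy) = 0` for homogeneous `x`. -/
def OddSP.IsAntiSelfAdj (S : OddSP k V) (I : V →ₗ[k] V) : Prop :=
  ∀ (p : ℕ) (x : V), S.Homog p x → ∀ y, S.g (I x) y + (-1 : k) ^ p * S.g x (I y) = 0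

/-- `g(Ix,y) = (−1)^{|x|} g(x,Iy)` for homogeneous `x`. -/
def OddSP.IsSelfAdj (S : OddSP k V) (I : V →ₗ[k] V) : Prop :=
  ∀ (p : ℕ) (x : V), S.Homog p x → ∀ y, S.g (I x) y = (-1 : k) ^ p * S.g x (I y)

/-- `U` is a graded subspace. -/
def OddSP.IsGraded (S : OddSP k V) (U : Submodule k V) : Prop :=
  U = (U ⊓ S.V0) ⊔ (U ⊓ S.V1)

/-- `U` is of type `1_K`: spanned by a single chain `v, Iv, …, I^{2K−1}v` with `v`
homogeneous of parity `K mod 2`, `I^{2K} v = 0`, and the prescribed Gram matrix. -/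
def OddSP.IsType1 (S : OddSP k V) (I : V →ₗ[k] V) (K : ℕ) (U : Submodule k V) : Prop :=
  ∃ v : V, S.Homog K v ∧ (I ^ (2 * K)) v = 0 ∧
    LinearIndependent k (fun m : Fin (2 * K) => (I ^ (m : ℕ)) v) ∧
    Submodule.span k (Set.range fun m : Fin (2 * K) => (I ^ (m : ℕ)) v) = U ∧
    ∀ m < 2 * K, ∀ m' < 2 * K,
      S.g ((I ^ m) v) ((I ^ m') v) =
        if m + m' = 2 * K - 1 then (-1 : k) ^ (m * (K % 2) + m * (m + 1) / 2) else 0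

/-- `U` is of type `2_K`: spanned by two chains `v, Iv, …, I^{K−1}v` and
`u, Iu, …, I^{K−1}u` with `v, u` homogeneous, `|v| + |u| ≡ K (mod 2)`,
`I^K v = I^K u = 0`, and the prescribed Gram matrix. -/
def OddSP.IsType2 (S : OddSP k V) (I : V →ₗ[k] V) (K : ℕ) (U : Submodule k V) : Prop :=
  ∃ (v u : V) (pv pu : ℕ), S.Homog pv v ∧ S.Homog pu u ∧ (pv + pu) % 2 = K % 2 ∧
    (I ^ K) v = 0 ∧ (I ^ K) u = 0 ∧
    LinearIndependent k
      (Sum.elim (fun m : Fin K => (I ^ (m : ℕ)) v) (fun m : Fin K => (I ^ (m : ℕ)) u)) ∧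
    Submodule.span k
      (Set.range (Sum.elim (fun m : Fin K => (I ^ (m : ℕ)) v)
        (fun m : Fin K => (I ^ (m : ℕ)) u))) = U ∧
    (∀ m < K, ∀ m' < K, S.g ((I ^ m) v) ((I ^ m') v) = 0) ∧
    (∀ m < K, ∀ m' < K, S.g ((I ^ m) u) ((I ^ m') u) = 0) ∧
    (∀ m < K, ∀ m' < K, S.g ((I ^ m) v) ((I ^ m') u) =
      if m + m' = K - 1 then (-1 : k) ^ (m * pv + m * (m + 1) / 2) else 0)

/-- `U` is of type `3`: `I` restricts to an invertible operator on `U`. -/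
def OddSP.IsType3 (I : V →ₗ[k] V) (U : Submodule k V) : Prop :=
  (∀ x ∈ U, I x ∈ U) ∧ (∀ x ∈ U, I x = 0 → x = 0) ∧ (∀ y ∈ U, ∃ x ∈ U, I x = y)

/-- If the symmetric bilinear form `(x,y) ↦ g(Ix,y)` on `V₁` (the
restriction of the even quadratic function `g(Ix,x)` to the even part of `ΠV`) is
non-degenerate, then `I` has an odd self-adjoint homotopy inverse `Ĩ` with
`I∘Ĩ + Ĩ∘I = id`. -/
theorem homotopyInverse_of_nondegenerate_quadratic
    {k V : Type*} [Field k] [IsAlgClosed k] [CharZero k]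
    [AddCommGroup V] [Module k V] [FiniteDimensional k V]
    (S : OddSP k V) (I : V →ₗ[k] V)
    (hodd : S.IsOddOp I) (hasa : S.IsAntiSelfAdj I)
    (hnd : ∀ x ∈ S.V1, (∀ y ∈ S.V1, S.g (I x) y = 0) → x = 0) :
    ∃ It : V →ₗ[k] V, S.IsOddOp It ∧ S.IsSelfAdj It ∧
      I ∘ₗ It + It ∘ₗ I = LinearMap.id := by
  classical
  obtain ⟨h01, h10⟩ := hodd
  -- decomposition of arbitrary vectors
  have hdec : ∀ y : V, ∃ a ∈ S.V0, ∃ b ∈ S.V1, y = a + b := by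
    intro y
    have hy : y ∈ S.V0 ⊔ S.V1 := by
      rw [S.compl.sup_eq_top]; trivial
    obtain ⟨a, ha, b, hb, hab⟩ := Submodule.mem_sup.mp hy
    exact ⟨a, ha, b, hb, hab.symm⟩
  -- perfect pairing ⇒ equal dimensions
  have hker0 : ∀ x ∈ S.V0, (∀ y ∈ S.V1, S.g x y = 0) → x = 0 := by
    intro x hx h
    refine S.nondeg x fun y => ?_
    obtain ⟨a, ha, b, hb, rfl⟩ := hdec y
    rw [map_add, S.zero00 x hx a ha, h b hb, add_zero]
  have hker1 : ∀ x ∈ S.V1, (∀ y ∈ S.V0, S.g x y = 0) → x = 0 := by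
    intro x hx h
    refine S.nondeg x fun y => ?_
    obtain ⟨a, ha, b, hb, rfl⟩ := hdec y
    rw [map_add, S.zero11 x hx b hb, h a ha, add_zero]
  have hfr : ∀ (A B : Submodule k V),
      (∀ x ∈ A, (∀ y ∈ B, S.g x y = 0) → x = 0) →
      Module.finrank k A ≤ Module.finrank k B := by
    intro A B hAB
    let φ : ↥A →ₗ[k] Module.Dual k ↥B := (S.g.compl₂ B.subtype).domRestrict A
    have hφ : Function.Injective φ := by
      rw [← LinearMap.ker_eq_bot, Submodule.eq_bot_iff]
      intro x hx
      have : (x : V) = 0 := by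
        refine hAB x x.2 fun y hy => ?_
        have := congrFun (congrArg (fun f => f.toFun) hx) ⟨y, hy⟩
        simpa [φ] using this
      exact Subtype.ext this
    calc Module.finrank k A ≤ Module.finrank k (Module.Dual k ↥B) :=
          LinearMap.finrank_le_finrank_of_injective hφ
      _ = Module.finrank k B := Subspace.dual_finrank_eq
  have hdim : Module.finrank k ↥S.V1 = Module.finrank k ↥S.V0 :=
    le_antisymm (hfr S.V1 S.V0 hker1) (hfr S.V0 S.V1 hker0)
  -- I restricted to V1 → V0 is bijective
  have hinj : ∀ x ∈ S.V1, I x = 0 → x = 0 := by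
    intro x hx h
    exact hnd x hx fun y _ => by rw [h, map_zero, LinearMap.zero_apply]
  let f : ↥S.V1 →ₗ[k] ↥S.V0 :=
    (I.domRestrict S.V1).codRestrict S.V0 fun x => h10 x x.2
  have hfinj : Function.Injective f := by
    rw [← LinearMap.ker_eq_bot, Submodule.eq_bot_iff]
    intro x hx
    refine Subtype.ext (hinj x x.2 ?_)
    have := congrArg (Subtype.val) hx
    exact this
  have hfsurj : Function.Surjective f :=
    (LinearMap.injective_iff_surjective_of_finrank_eq_finrank hdim).mp hfinj
  let e : ↥S.V1 ≃ₗ[k] ↥S.V0 := LinearEquiv.ofBijective f ⟨hfinj, hfsurj⟩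
  let p0 : V →ₗ[k] ↥S.V0 := S.V0.projectionOnto S.V1 S.compl
  let It : V →ₗ[k] V := S.V1.subtype ∘ₗ e.symm.toLinearMap ∘ₗ p0
  have hIt1 : ∀ x, It x ∈ S.V1 := fun x => (e.symm (p0 x)).2
  have hItV1 : ∀ x ∈ S.V1, It x = 0 := by
    intro x hx
    simp [It, p0, Submodule.projectionOnto_apply_of_mem_right S.compl hx]
  have hIIt : ∀ x ∈ S.V0, I (It x) = x := by
    intro x hx
    have h1 : p0 x = ⟨x, hx⟩ := Submodule.projectionOnto_apply_left S.compl ⟨x, hx⟩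
    have h2 : f (e.symm ⟨x, hx⟩) = ⟨x, hx⟩ := e.apply_symm_apply ⟨x, hx⟩
    have h3 := congrArg Subtype.val h2
    simp only [It, LinearMap.comp_apply, h1]
    exact h3
  have hItI : ∀ x ∈ S.V1, It (I x) = x := by
    intro x hx
    have hIx : I x ∈ S.V0 := h10 x hx
    have h1 : p0 (I x) = ⟨I x, hIx⟩ :=
      Submodule.projectionOnto_apply_left S.compl ⟨I x, hIx⟩
    have h2 : f ⟨x, hx⟩ = ⟨I x, hIx⟩ := by
      apply Subtype.ext; rfl
    have h3 : e.symm ⟨I x, hIx⟩ = ⟨x, hx⟩ := by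
      rw [← h2]; exact e.symm_apply_apply ⟨x, hx⟩
    simp only [It, LinearMap.comp_apply, h1, LinearEquiv.coe_coe]
    rw [h3]; rfl
  refine ⟨It, ⟨fun x _ => hIt1 x, fun x hx => by rw [hItV1 x hx]; exact S.V0.zero_mem⟩,
    ?_, ?_⟩
  · -- self-adjointness
    intro p x hx y
    rcases Nat.even_or_odd p with hp | hp
    · -- x ∈ V0, (-1)^p = 1
      have hx0 : x ∈ S.V0 := by
        simpa [OddSP.Homog, Nat.even_iff.mp hp] using hx
      rw [hp.neg_one_pow, one_mul]
      obtain ⟨a, ha, b, hb, rfl⟩ := hdec y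
      have key : S.g (It x) a = S.g x (It a) := by
        have hw := hIt1 x
        have hIw : I (It x) = x := hIIt x hx0
        have hIu : I (It a) = a := hIIt a ha
        have hasa1 := hasa 1 (It x) (by simpa [OddSP.Homog] using hw) (It a)
        rw [hIw, hIu] at hasa1
        linear_combination -hasa1
      rw [map_add, map_add, map_add]
      rw [key, S.zero11 (It x) (hIt1 x) b hb, hItV1 b hb, map_zero, add_zero]
    · -- x ∈ V1
      have hx1 : x ∈ S.V1 := by
        simpa [OddSP.Homog, Nat.odd_iff.mp hp] using hx
      rw [hItV1 x hx1, map_zero, LinearMap.zero_apply,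
        S.zero11 x hx1 (It y) (hIt1 y), mul_zero]
  · -- homotopy identity
    apply LinearMap.ext
    intro x
    obtain ⟨a, ha, b, hb, rfl⟩ := hdec x
    simp only [LinearMap.add_apply, LinearMap.comp_apply, LinearMap.id_apply, map_add]
    rw [hIIt a ha, hItV1 b hb, map_zero, hItV1 (I a) (h01 a ha), hItI b hb]
    abel
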